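/- In the MAJSAT gadget built from a Boolean function φ on n ≥ 1 variables, there exists a stochastically decisive coordinate set I with |I| ≤ 0 if and only if at least half of all assignments satisfy φ, i.e., 2·|{s ∈ S : φ(s) = true}| ≥ 2^n. -/

import Mathlib

/-- Full-information optimizer: actions maximizing pointwise utility at state `s`. -/
def Opt {n : ℕ} {A : Type*} {X : Fin n → Type*}
    (U : A → (∀ i, X i) → ℝ) (s : ∀ i, X i) : Set A :=
  {a | ∀ b, U b s ≤ U a s}

/-- Conditional (unnormalized) expected utility of action `a` over the `I`-fiber of `s`. -/
noncomputable def condEU {n : ℕ} {A : Type*} {X : Fin n → Type*}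
    [∀ i, Fintype (X i)] [∀ i, DecidableEq (X i)]
    (U : A → (∀ i, X i) → ℝ) (P : (∀ i, X i) → ℝ)
    (I : Finset (Fin n)) (s : ∀ i, X i) (a : A) : ℝ :=
  ∑ t ∈ Finset.univ.filter (fun t : ∀ i, X i => ∀ i ∈ I, t i = s i), P t * U a t

/-- Conditional optimizer: actions maximizing conditional expected utility on the `I`-fiber. -/
noncomputable def OptS {n : ℕ} {A : Type*} {X : Fin n → Type*}
    [∀ i, Fintype (X i)] [∀ i, DecidableEq (X i)]
    (U : A → (∀ i, X i) → ℝ) (P : (∀ i, X i) → ℝ)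
    (I : Finset (Fin n)) (s : ∀ i, X i) : Set A :=
  {a | ∀ b, condEU U P I s b ≤ condEU U P I s a}

/-- `I` is statically sufficient: states agreeing on `I` have the same optimizer. -/
def StaticSufficient {n : ℕ} {A : Type*} {X : Fin n → Type*}
    (U : A → (∀ i, X i) → ℝ) (I : Finset (Fin n)) : Prop :=
  ∀ s t : ∀ i, X i, (∀ i ∈ I, s i = t i) → Opt U s = Opt U t

/-- `I` is stochastically sufficient: the conditional optimizer agrees with the
full-information optimizer at every state. -/
def StochSufficient {n : ℕ} {A : Type*} {X : Fin n → Type*}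
    [∀ i, Fintype (X i)] [∀ i, DecidableEq (X i)]
    (U : A → (∀ i, X i) → ℝ) (P : (∀ i, X i) → ℝ) (I : Finset (Fin n)) : Prop :=
  ∀ s : ∀ i, X i, OptS U P I s = Opt U s

/-- `I` is stochastically decisive: every positive-probability state's observed fiber
has a unique conditional optimal action. -/
def StochDecisive {n : ℕ} {A : Type*} {X : Fin n → Type*}
    [∀ i, Fintype (X i)] [∀ i, DecidableEq (X i)]
    (U : A → (∀ i, X i) → ℝ) (P : (∀ i, X i) → ℝ) (I : Finset (Fin n)) : Prop :=
  ∀ s : ∀ i, X i, 0 < P s → ∃ a : A, OptS U P I s = {a}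


/-- The three actions of the MAJSAT gadget. -/
inductive GAct : Type
  | accept : GAct
  | holdL : GAct
  | holdR : GAct
deriving DecidableEq

instance : Fintype GAct where
  elems := {GAct.accept, GAct.holdL, GAct.holdR}
  complete := fun x => by cases x <;> simp

/-- Gadget utility: `accept` pays `1` on satisfying assignments and `0` otherwise;
both hold actions pay the constant `1/2 - 2^{-(n+1)}`. -/
noncomputable def gU (n : ℕ) (φ : (Fin n → Bool) → Bool) :
    GAct → (∀ _ : Fin n, Bool) → ℝ
  | GAct.accept, s => if φ s then 1 else 0
  | GAct.holdL, _ => 1 / 2 - 1 / 2 ^ (n + 1)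
  | GAct.holdR, _ => 1 / 2 - 1 / 2 ^ (n + 1)

/-- Uniform distribution on the Boolean cube. -/
noncomputable def gP (n : ℕ) : (∀ _ : Fin n, Bool) → ℝ := fun _ => 1 / 2 ^ n


section Aux
open Finset

lemma majsat_condEU_accept (n : ℕ) (φ : (Fin n → Bool) → Bool) (s : Fin n → Bool) :
    condEU (X := fun _ : Fin n => Bool) (gU n φ) (gP n) ∅ s GAct.accept
      = ((Finset.univ.filter fun t : Fin n → Bool => φ t = true).card : ℝ) / 2 ^ n := by
  unfold condEU
  rw [Finset.filter_true_of_mem (by simp)]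
  simp only [gU, gP, mul_ite, mul_one, mul_zero]
  rw [Finset.sum_ite, Finset.sum_const, Finset.sum_const]
  simp [nsmul_eq_mul, div_eq_mul_inv, one_div]

lemma majsat_condEU_hold (n : ℕ) (φ : (Fin n → Bool) → Bool) (s : Fin n → Bool)
    (a : GAct) (ha : a ≠ GAct.accept) :
    condEU (X := fun _ : Fin n => Bool) (gU n φ) (gP n) ∅ s a
      = 1 / 2 - 1 / 2 ^ (n + 1) := by
  have h2 : ((2:ℝ) ^ n) ≠ 0 := by positivity
  have hcard : (Fintype.card (Fin n → Bool) : ℝ) = 2 ^ n := by simp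
  cases a with
  | accept => exact absurd rfl ha
  | holdL =>
      unfold condEU
      rw [Finset.filter_true_of_mem (by simp)]
      simp only [gU, gP]
      rw [Finset.sum_const, Finset.card_univ, nsmul_eq_mul, hcard]
      field_simp
  | holdR =>
      unfold condEU
      rw [Finset.filter_true_of_mem (by simp)]
      simp only [gU, gP]
      rw [Finset.sum_const, Finset.card_univ, nsmul_eq_mul, hcard]
      field_simp

lemma majsat_key (n k : ℕ) :
    ((1:ℝ) / 2 - 1 / 2 ^ (n + 1) < (k : ℝ) / 2 ^ n) ↔ 2 ^ n ≤ 2 * k := by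
  have h1 : (0:ℝ) < 2 ^ (n + 1) := by positivity
  have h2 : ((2:ℝ) ^ n) ≠ 0 := by positivity
  have e1 : (1:ℝ) / 2 - 1 / 2 ^ (n + 1) = ((2:ℝ) ^ n - 1) / 2 ^ (n + 1) := by
    rw [pow_succ]
    field_simp
  have e2 : (k : ℝ) / 2 ^ n = (2 * (k:ℝ)) / 2 ^ (n + 1) := by
    rw [pow_succ]
    field_simp
  rw [e1, e2, div_lt_div_iff₀ h1 h1, mul_lt_mul_iff_left₀ h1, sub_lt_iff_lt_add]
  constructor
  · intro h
    have : (2:ℕ) ^ n < 2 * k + 1 := by exact_mod_cast h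
    omega
  · intro h
    have : (2:ℕ) ^ n < 2 * k + 1 := by omega
    exact_mod_cast this

end Aux

theorem majsat_gadget_minimum_decisive_set
    (n : ℕ) (hn : 1 ≤ n) (φ : (Fin n → Bool) → Bool) :
    (∃ I : Finset (Fin n), I.card ≤ 0 ∧
        StochDecisive (X := fun _ : Fin n => Bool) (gU n φ) (gP n) I) ↔
      2 ^ n ≤ 2 * (Finset.univ.filter fun s : Fin n → Bool => φ s = true).card := by
  set k := (Finset.univ.filter fun s : Fin n → Bool => φ s = true).card with hk
  constructor
  · rintro ⟨I, hI, hdec⟩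
    have hIe : I = ∅ := Finset.card_eq_zero.mp (Nat.le_zero.mp hI)
    subst hIe
    set s0 : Fin n → Bool := fun _ => false with hs0
    have hPpos : 0 < gP n s0 := by
      unfold gP; positivity
    obtain ⟨a, ha⟩ := hdec s0 hPpos
    have hLR : condEU (X := fun _ : Fin n => Bool) (gU n φ) (gP n) ∅ s0 GAct.holdL
        = condEU (X := fun _ : Fin n => Bool) (gU n φ) (gP n) ∅ s0 GAct.holdR := by
      rw [majsat_condEU_hold n φ s0 GAct.holdL (by simp),
        majsat_condEU_hold n φ s0 GAct.holdR (by simp)]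
    -- a must be accept
    have haA : a = GAct.accept := by
      by_contra hne
      have hLin : GAct.holdL ∈ OptS (X := fun _ : Fin n => Bool) (gU n φ) (gP n) ∅ s0 ↔
          GAct.holdR ∈ OptS (X := fun _ : Fin n => Bool) (gU n φ) (gP n) ∅ s0 := by
        constructor <;> intro h <;> intro b <;> [rw [← hLR]; rw [hLR]] <;> exact h b
      cases a with
      | accept => exact hne rfl
      | holdL =>
          have : GAct.holdR ∈ OptS (X := fun _ : Fin n => Bool) (gU n φ) (gP n) ∅ s0 :=
            hLin.mp (by rw [ha]; rfl)
          rw [ha] at this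
          simp at this
      | holdR =>
          have : GAct.holdL ∈ OptS (X := fun _ : Fin n => Bool) (gU n φ) (gP n) ∅ s0 :=
            hLin.mpr (by rw [ha]; rfl)
          rw [ha] at this
          simp at this
    subst haA
    -- holdL not optimal, accept optimal ⇒ strict inequality
    have hmem : GAct.accept ∈ OptS (X := fun _ : Fin n => Bool) (gU n φ) (gP n) ∅ s0 := by
      rw [ha]; rfl
    have hnot : GAct.holdL ∉ OptS (X := fun _ : Fin n => Bool) (gU n φ) (gP n) ∅ s0 := by
      rw [ha]; simp
    have hstrict : condEU (X := fun _ : Fin n => Bool) (gU n φ) (gP n) ∅ s0 GAct.holdL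
        < condEU (X := fun _ : Fin n => Bool) (gU n φ) (gP n) ∅ s0 GAct.accept := by
      by_contra hle
      push_neg at hle
      apply hnot
      intro b
      exact le_trans (hmem b) hle
    rw [majsat_condEU_hold n φ s0 GAct.holdL (by simp), majsat_condEU_accept] at hstrict
    exact (majsat_key n k).mp hstrict
  · intro h
    refine ⟨∅, le_refl 0, ?_⟩
    intro s _
    refine ⟨GAct.accept, ?_⟩
    have hstrict : (1:ℝ) / 2 - 1 / 2 ^ (n + 1) < (k : ℝ) / 2 ^ n := (majsat_key n k).mpr h
    have hval : ∀ a : GAct, a ≠ GAct.accept →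
        condEU (X := fun _ : Fin n => Bool) (gU n φ) (gP n) ∅ s a
          < condEU (X := fun _ : Fin n => Bool) (gU n φ) (gP n) ∅ s GAct.accept := by
      intro a haa
      rw [majsat_condEU_hold n φ s a haa, majsat_condEU_accept]
      exact hstrict
    ext b
    simp only [Set.mem_singleton_iff]
    constructor
    · intro hb
      by_contra hne
      exact absurd (hb GAct.accept) (not_le.mpr (hval b hne))
    · rintro rfl
      intro b
      by_cases hb : b = GAct.accept
      · subst hb; exact le_refl _
      · exact le_of_lt (hval b hb)
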